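/- arXiv:1011.1869 — 9 statements merged into one kernel-verified Lean document; each statement's English description precedes it below -/
import Mathlib

section
/- Every compact Hausdorff P-space is finite. -/
/-- Every compact Hausdorff P-space is finite. -/
theorem stmt_2 {X : Type*} [TopologicalSpace X] [CompactSpace X] [T2Space X]
    (hP : ∀ f : ℕ → Set X, (∀ n, IsOpen (f n)) → IsOpen (⋂ n, f n)) :
    Finite X := by
  -- every countable set is closed
  have hcl : ∀ A : Set X, A.Countable → IsClosed A := by
    intro A hA
    rcases A.eq_empty_or_nonempty with h | h
    · simp [h]
    obtain ⟨g, rfl⟩ := Set.Countable.exists_eq_range hA h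
    rw [← isOpen_compl_iff, isOpen_iff_mem_nhds]
    intro y hy
    have hne : ∀ n, y ≠ g n := fun n h => hy ⟨n, h.symm⟩
    choose U V hU hV hyU hgV hdis using fun n => t2_separation (hne n)
    have hop : IsOpen (⋂ n, U n) := hP U hU
    refine Filter.mem_of_superset (hop.mem_nhds (Set.mem_iInter.2 hyU)) ?_
    intro z hz hzr
    obtain ⟨n, hn⟩ := hzr
    exact Set.disjoint_left.mp (hdis n) (Set.mem_iInter.mp hz n) (hn ▸ hgV n)
  by_contra hfin
  have : Infinite X := not_finite_iff_infinite.mp hfin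
  let f := Infinite.natEmbedding X
  set S : Set X := Set.range f with hS
  have hSc : S.Countable := Set.countable_range f
  have hScomp : IsCompact S := (hcl S hSc).isCompact
  have hUo : ∀ x : X, IsOpen ((S \ {x})ᶜ) :=
    fun x => (hcl _ (hSc.mono Set.diff_subset)).isOpen_compl
  have hcov : S ⊆ ⋃ x : X, (S \ {x})ᶜ := by
    intro y hy
    exact Set.mem_iUnion.2 ⟨y, fun h => h.2 rfl⟩
  obtain ⟨t, ht⟩ := hScomp.elim_finite_subcover _ hUo hcov
  have hsub : S ⊆ ↑t := by
    intro y hy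
    obtain ⟨x, hx, hyx⟩ := Set.mem_iUnion₂.mp (ht hy)
    have : y = x := by
      by_contra hne
      exact hyx ⟨hy, hne⟩
    exact this ▸ hx
  have hfin' : S.Finite := t.finite_toSet.subset hsub
  exact (Set.infinite_range_of_injective f.injective) hfin'
end

section
/- If a topological group G is a Lindelöf P-space, then G is Rothberger bounded: for every sequence (U_n : n < ω) of neighborhoods of the identity there is a sequence (x_n : n < ω) of elements of G such that G = ⋃_{n<ω} x_n * U_n. -/
open scoped Pointwise

/-- A topological group that is a Lindelöf P-space is Rothberger bounded: for every
sequence of neighborhoods of the identity there are translates covering the group. -/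
theorem stmt_5 {G : Type*} [Group G] [TopologicalSpace G] [IsTopologicalGroup G]
    [LindelofSpace G]
    (hP : ∀ f : ℕ → Set G, (∀ n, IsOpen (f n)) → IsOpen (⋂ n, f n))
    (U : ℕ → Set G) (hU : ∀ n, U n ∈ nhds (1 : G)) :
    ∃ x : ℕ → G, (⋃ n, x n • U n) = Set.univ := by
  choose W hWU hWo hW1 using fun n => mem_nhds_iff.mp (hU n)
  set V : Set G := ⋂ n, W n with hV
  have hVo : IsOpen V := hP W hWo
  have hV1 : (1 : G) ∈ V := Set.mem_iInter.2 hW1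
  have hcov : (Set.univ : Set G) ⊆ ⋃ g : G, g • V := by
    intro g _
    exact Set.mem_iUnion.2 ⟨g, ⟨1, hV1, mul_one g⟩⟩
  obtain ⟨t, htc, htcov⟩ := isLindelof_univ.elim_countable_subcover
    (fun g : G => g • V) (fun g => hVo.smul g) hcov
  have htne : t.Nonempty := by
    rcases Set.mem_iUnion₂.1 (htcov (Set.mem_univ (1 : G))) with ⟨a, ha, _⟩
    exact ⟨a, ha⟩
  obtain ⟨f, hf⟩ := Set.Countable.exists_eq_range htc htne
  refine ⟨f, Set.eq_univ_of_forall fun g => ?_⟩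
  rcases Set.mem_iUnion₂.1 (htcov (Set.mem_univ g)) with ⟨a, ha, hga⟩
  rw [hf] at ha
  rcases ha with ⟨n, rfl⟩
  rcases hga with ⟨v, hv, rfl⟩
  exact Set.mem_iUnion.2 ⟨n, ⟨v, hWU n (Set.mem_iInter.1 hv n), rfl⟩⟩
end

section
/- Let G be a Lindelöf topological group that is a P-space. Then for every open cover U of G there is an open neighborhood N of the identity such that for each x in G there is a member V of U with x*N ⊆ V. -/
open scoped Pointwise

/-- Lebesgue covering lemma for Lindelöf P-groups: for every open cover `U` of a
Lindelöf P-group `G` there is an open neighborhood `N` of the identity such that each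
translate `x • N` is contained in some member of `U`. -/
theorem stmt_6 {G : Type*} [Group G] [TopologicalSpace G] [IsTopologicalGroup G]
    [LindelofSpace G]
    (hP : ∀ f : ℕ → Set G, (∀ n, IsOpen (f n)) → IsOpen (⋂ n, f n))
    (U : Set (Set G)) (hUopen : ∀ V ∈ U, IsOpen V) (hUcov : ⋃₀ U = Set.univ) :
    ∃ N : Set G, IsOpen N ∧ (1 : G) ∈ N ∧
      ∀ x : G, ∃ V ∈ U, x • N ⊆ V := by
  -- For each x choose V x ∈ U containing x and open W x ∋ 1 with W x * W x ⊆ x⁻¹ • V x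
  have hchoice : ∀ x : G, ∃ V ∈ U, ∃ W : Set G, IsOpen W ∧ (1 : G) ∈ W ∧
      W * W ⊆ x⁻¹ • V := by
    intro x
    have hx : x ∈ ⋃₀ U := by rw [hUcov]; trivial
    obtain ⟨V, hVU, hxV⟩ := hx
    have hnhds : x⁻¹ • V ∈ nhds (1 : G) := by
      have ho : IsOpen (x⁻¹ • V) := (hUopen V hVU).smul _
      have h1 : (1 : G) ∈ x⁻¹ • V := ⟨x, hxV, by simp⟩
      exact ho.mem_nhds h1
    obtain ⟨W, hWo, hW1, hWW⟩ := exists_open_nhds_one_mul_subset hnhds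
    exact ⟨V, hVU, W, hWo, hW1, hWW⟩
  choose V hVU W hWo hW1 hWW using hchoice
  -- Lindelöf: countable subcover of the cover x ↦ x • W x
  have hcov : (Set.univ : Set G) ⊆ ⋃ x, x • W x := by
    intro x _
    exact Set.mem_iUnion.2 ⟨x, ⟨1, hW1 x, by simp⟩⟩
  obtain ⟨t, htc, htcov⟩ := isLindelof_univ.elim_countable_subcover
    (fun x => x • W x) (fun x => (hWo x).smul x) hcov
  have htne : t.Nonempty := by
    obtain ⟨x, hx⟩ := Set.mem_iUnion₂.1 (htcov (Set.mem_univ (1 : G)))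
    exact ⟨x, hx.1⟩
  obtain ⟨f, hf⟩ := htc.exists_eq_range htne
  refine ⟨⋂ n, W (f n), hP _ (fun n => hWo (f n)), Set.mem_iInter.2 fun n => hW1 (f n), ?_⟩
  intro x
  obtain ⟨y, hyt, hxy⟩ := Set.mem_iUnion₂.1 (htcov (Set.mem_univ x))
  rw [hf] at hyt
  obtain ⟨n, rfl⟩ := hyt
  refine ⟨V (f n), hVU (f n), ?_⟩
  rintro _ ⟨z, hz, rfl⟩
  obtain ⟨w, hw, rfl⟩ := hxy
  have hzW : z ∈ W (f n) := Set.mem_iInter.1 hz n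
  have : w * z ∈ (f n)⁻¹ • V (f n) := hWW (f n) (Set.mul_mem_mul hw hzW)
  obtain ⟨v, hv, hvz⟩ := this
  have hvz' : (f n)⁻¹ * v = w * z := hvz
  have hv2 : v = f n * w * z := by
    rw [mul_assoc, ← hvz', ← mul_assoc, mul_inv_cancel, one_mul]
  show f n * w * z ∈ V (f n)
  rw [← hv2]
  exact hv
end

section
/- Let I be an index set and for each i in I let X_i be a σ-compact topological group with identity e_i. Then the subgroup G = {f ∈ ∏_{i∈I} X_i : {j : f(j) ≠ e_j} is finite}, with the product topology, is σ-compact. -/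
open Filter Set Topology

/-- Corson's theorem: the subgroup of finitely supported elements of a product of
σ-compact topological groups is σ-compact (in the product topology). -/
theorem stmt_9 {I : Type*} (X : I → Type*) [∀ i, Group (X i)]
    [∀ i, TopologicalSpace (X i)] [∀ i, IsTopologicalGroup (X i)]
    [∀ i, SigmaCompactSpace (X i)] :
    IsSigmaCompact {f : ∀ i, X i | {j | f j ≠ 1}.Finite} := by
  classical
  set K : ∀ i, ℕ → Set (X i) := fun i n => compactCovering (X i) n ∪ {1} with hKdef
  have hKc : ∀ i n, IsCompact (K i n) := fun i n =>
    (isCompact_compactCovering (X i) n).union isCompact_singleton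
  set D : ℕ → Set (∀ i, X i) := fun n =>
    {f | (∀ i, f i ∈ K i n) ∧ ∃ s : Finset I, s.card ≤ n ∧ ∀ j ∉ s, f j = 1} with hDdef
  refine ⟨D, fun n => ?_, ?_⟩
  · -- compactness of D n
    rw [isCompact_iff_ultrafilter_le_nhds]
    intro u hu
    have hD : D n ∈ u := le_principal_iff.mp hu
    have hcoord : ∀ i, ∃ x ∈ K i n, (Ultrafilter.map (fun f => f i) u : Filter (X i)) ≤ 𝓝 x := by
      intro i
      apply (hKc i n).ultrafilter_le_nhds
      rw [Ultrafilter.coe_map, le_principal_iff, mem_map]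
      exact mem_of_superset hD fun f hf => hf.1 i
    choose x hxK hx using hcoord
    set g : ∀ i, X i := fun i => if {f : ∀ i, X i | f i = 1} ∈ u then 1 else x i with hgdef
    have hne : ∀ i, g i ≠ 1 → ({f : ∀ i, X i | f i ≠ 1} ∈ u) := by
      intro i hgi
      have hnot : {f : ∀ i, X i | f i = 1} ∉ u := by
        intro h
        apply hgi
        simp only [hgdef, if_pos h]
      have := (Ultrafilter.compl_mem_iff_notMem (s := {f : ∀ i, X i | f i = 1})).mpr hnot
      simpa [compl_setOf] using this
    -- the cardinality bound
    have hC : ∀ t : Finset I, (∀ j ∈ t, g j ≠ 1) → t.card ≤ n := by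
      intro t ht
      have hmem : (D n ∩ ⋂ j ∈ t, {f : ∀ i, X i | f j ≠ 1}) ∈ u :=
        inter_mem hD ((biInter_mem t.finite_toSet).mpr fun j hj => hne j (ht j hj))
      obtain ⟨f, hfD, hft⟩ := Filter.nonempty_of_mem hmem
      obtain ⟨-, s, hs, hfs⟩ := hfD
      have hsub : t ⊆ s := by
        intro j hj
        by_contra hjs
        have h1 := mem_iInter₂.mp hft j hj
        simp only [mem_setOf_eq] at h1
        exact h1 (hfs j hjs)
      exact le_trans (Finset.card_le_card hsub) hs
    have hTfin : {j | g j ≠ 1}.Finite := by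
      by_contra hinf
      have hinf' : {j | g j ≠ 1}.Infinite := hinf
      obtain ⟨t, hts, htc⟩ := hinf'.exists_subset_card_eq (n + 1)
      have := hC t fun j hj => hts hj
      omega
    refine ⟨g, ⟨fun i => ?_, hTfin.toFinset, ?_, ?_⟩, ?_⟩
    · by_cases h : {f : ∀ i, X i | f i = 1} ∈ u
      · simp only [hgdef, if_pos h]; exact Or.inr rfl
      · simp only [hgdef, if_neg h]; exact hxK i
    · apply hC
      intro j hj
      exact (hTfin.mem_toFinset).mp hj
    · intro j hj
      by_contra h
      exact hj (hTfin.mem_toFinset.mpr h)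
    · -- convergence
      rw [show (𝓝 g) = 𝓝 g from rfl]
      have : Tendsto (id : (∀ i, X i) → ∀ i, X i) u (𝓝 g) := by
        rw [tendsto_pi_nhds]
        intro i
        by_cases h : {f : ∀ i, X i | f i = 1} ∈ u
        · have h1 : Tendsto (fun f : ∀ i, X i => f i) u (pure (1 : X i)) := by
            intro s hs
            rw [mem_map]
            exact mem_of_superset h fun f hf => by
              simp only [mem_pure] at hs
              simp only [Set.mem_setOf_eq] at hf
              simpa [hf] using hs
          have : g i = 1 := by simp only [hgdef, if_pos h]
          rw [this]
          exact h1.mono_right (pure_le_nhds 1)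
        · have : g i = x i := by simp only [hgdef, if_neg h]
          rw [this]
          exact hx i
      exact this
  · -- the union equals the set of finitely supported elements
    ext f
    simp only [mem_iUnion, mem_setOf_eq]
    constructor
    · rintro ⟨n, -, s, -, hfs⟩
      exact s.finite_toSet.subset fun j hj => by
        by_contra hjs
        exact hj (hfs j hjs)
    · intro hf
      have hmem : ∀ i, ∃ m, f i ∈ compactCovering (X i) m := fun i =>
        exists_mem_compactCovering (f i)
      choose m hm using hmem
      set s : Finset I := hf.toFinset with hsdef
      refine ⟨max s.card (s.sup m), fun i => ?_, s, le_max_left _ _, fun j hj => ?_⟩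
      · by_cases hi : i ∈ s
        · left
          refine compactCovering_subset (X i) ?_ (hm i)
          exact le_trans (Finset.le_sup hi) (le_max_right _ _)
        · right
          have : f i = 1 := by
            by_contra h
            exact hi (hf.mem_toFinset.mpr h)
          simp [this]
      · by_contra h
        exact hj (hf.mem_toFinset.mpr h)
end

section
/- For every infinite cardinal κ there is a T₀ topological group of cardinality κ that is σ-compact and Rothberger bounded. Concretely, the group G of finitely supported elements of ℤ^κ (product topology, ℤ discrete) is σ-compact, has cardinality κ, and is Rothberger bounded. -/
open scoped Pointwise

open Set Function Filter Cardinal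

/-- For every infinite cardinal (represented by an infinite index type `κ`), the group
`G` of finitely supported elements of `ℤ^κ` (product topology, `ℤ` discrete) is a
T₀ topological group that is σ-compact, has cardinality `#κ`, and is Rothberger
bounded. -/
theorem stmt_10 (κ : Type*) [Infinite κ] :
    IsSigmaCompact {f : κ → ℤ | (Function.support f).Finite} ∧
    T0Space {f : κ → ℤ // (Function.support f).Finite} ∧
    Cardinal.mk {f : κ → ℤ // (Function.support f).Finite} = Cardinal.mk κ ∧
    (∀ U : ℕ → Set (κ → ℤ), (∀ n, U n ∈ nhds (0 : κ → ℤ)) →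
      ∃ x : ℕ → (κ → ℤ), (∀ n, (Function.support (x n)).Finite) ∧
        {f : κ → ℤ | (Function.support f).Finite} ⊆ ⋃ n, x n +ᵥ U n) := by
  classical
  refine ⟨?_, inferInstance, ?_, ?_⟩
  · -- σ-compactness
    refine ⟨fun n => {f | ∀ i, f i ∈ Set.Icc (-(n : ℤ)) n} ∩
        {f | ∀ t : Finset κ, (∀ i ∈ t, f i ≠ 0) → t.card ≤ n}, fun n => ?_, ?_⟩
    · apply IsCompact.inter_right
      · have h1 : {f : κ → ℤ | ∀ i, f i ∈ Set.Icc (-(n : ℤ)) n}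
            = Set.pi Set.univ (fun _ => Set.Icc (-(n : ℤ)) (n : ℤ)) := by
          ext f; simp only [Set.mem_setOf_eq, Set.mem_univ_pi]
        rw [h1]
        exact isCompact_univ_pi fun _ => (Set.finite_Icc _ _).isCompact
      · have h2 : {f : κ → ℤ | ∀ t : Finset κ, (∀ i ∈ t, f i ≠ 0) → t.card ≤ n}
            = ⋂ t : Finset κ, {f : κ → ℤ | (∀ i ∈ t, f i ≠ 0) → t.card ≤ n} := by
          ext f; simp
        rw [h2]
        refine isClosed_iInter fun t => ?_
        by_cases h : t.card ≤ n
        · have : {f : κ → ℤ | (∀ i ∈ t, f i ≠ 0) → t.card ≤ n} = Set.univ := by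
            ext f; simp [h]
          rw [this]; exact isClosed_univ
        · have : {f : κ → ℤ | (∀ i ∈ t, f i ≠ 0) → t.card ≤ n}
              = ⋃ i ∈ t, {f : κ → ℤ | f i = 0} := by
            ext f
            simp only [Set.mem_setOf_eq, Set.mem_iUnion, exists_prop]
            constructor
            · intro hf
              by_contra hc
              push_neg at hc
              exact h (hf fun i hi => hc i hi)
            · rintro ⟨i, hi, hfi⟩ hall
              exact absurd hfi (hall i hi)
          rw [this]
          exact Set.Finite.isClosed_biUnion t.finite_toSet
            (fun i _ => isClosed_singleton.preimage (continuous_apply i))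
    · ext f
      simp only [Set.mem_iUnion, Set.mem_inter_iff, Set.mem_setOf_eq]
      constructor
      · rintro ⟨n, -, hC⟩
        by_contra hinf
        have hinf' : (Function.support f).Infinite := hinf
        obtain ⟨t, hts, htc⟩ := hinf'.exists_subset_card_eq (n + 1)
        have := hC t fun i hi => hts hi
        omega
      · intro hf
        set s := hf.toFinset with hs
        refine ⟨s.card + s.sup fun i => (f i).natAbs, fun i => ?_, fun t ht => ?_⟩
        · by_cases h : f i = 0
          · simp [h]
            constructor <;> omega
          · have hi : i ∈ s := by simp [hs, h]
            have : (f i).natAbs ≤ s.sup fun i => (f i).natAbs :=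
              Finset.le_sup (f := fun i => (f i).natAbs) hi
            simp only [Set.mem_Icc]
            push_cast
            omega
        · have hsub : t ⊆ s := fun i hi => by simp [hs, ht i hi]
          have := Finset.card_le_card hsub
          omega
  · -- cardinality
    have e : {f : κ → ℤ // (Function.support f).Finite} ≃ (κ →₀ ℤ) :=
      { toFun := fun f => Finsupp.ofSupportFinite f.1 f.2
        invFun := fun g => ⟨g, g.finite_support⟩
        left_inv := fun f => Subtype.ext Finsupp.ofSupportFinite_coe
        right_inv := fun g => DFunLike.coe_injective Finsupp.ofSupportFinite_coe }
    rw [Cardinal.mk_congr e, Cardinal.mk_finsupp_lift_of_infinite]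
    simp only [Cardinal.mk_int, Cardinal.lift_aleph0, Cardinal.lift_uzero]
    exact max_eq_left (Cardinal.aleph0_le_mk κ)
  · -- Rothberger bounded
    intro U hU
    have key : ∀ n, ∃ F : Finset κ, {f : κ → ℤ | ∀ i ∈ F, f i = 0} ⊆ U n := by
      intro n
      have h := hU n
      rw [nhds_pi, Filter.mem_pi] at h
      obtain ⟨I, hIf, t, ht, hsub⟩ := h
      refine ⟨hIf.toFinset, fun f hf => hsub fun i hi => ?_⟩
      have h0 : (0 : κ → ℤ) i ∈ t i := by
        have hti := ht i
        rw [nhds_discrete, Filter.mem_pure] at hti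
        exact hti
      have hfi : f i = 0 := hf i (hIf.mem_toFinset.2 hi)
      rw [hfi]
      exact h0
    choose F hF using key
    set D : Set κ := ⋃ n, (F n : Set κ) with hD
    have hDc : D.Countable := Set.countable_iUnion fun n => (F n).countable_toSet
    haveI hDsub : Countable ↥D := hDc.to_subtype
    set S : Set (κ → ℤ) := {f | (Function.support f).Finite ∧ Function.support f ⊆ D} with hS
    have hScount : S.Countable := by
      rw [← Set.countable_coe_iff]
      have hfin : ∀ f : S, (Function.support fun d : D => f.1 d).Finite := by
        intro f
        have hsub : (Function.support fun d : D => f.1 d) ⊆ Subtype.val ⁻¹' Function.support f.1 :=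
          fun d hd => hd
        exact Set.Finite.subset (f.2.1.preimage Subtype.val_injective.injOn) hsub
      have hinj : Function.Injective
          (fun f : S => Finsupp.ofSupportFinite (fun d : D => f.1 d) (hfin f)) := by
        intro f f' hff
        have hcoe : (fun d : D => f.1 d) = fun d : D => f'.1 d := by
          have := congrArg (fun g : (↥D →₀ ℤ) => (g : ↥D → ℤ)) hff
          simpa [Finsupp.ofSupportFinite_coe] using this
        refine Subtype.ext (funext fun i => ?_)
        by_cases hi : i ∈ D
        · exact congrFun hcoe ⟨i, hi⟩
        · have h1 : f.1 i = 0 := by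
            by_contra hne
            exact hi (f.2.2 hne)
          have h2 : f'.1 i = 0 := by
            by_contra hne
            exact hi (f'.2.2 hne)
          rw [h1, h2]
      exact hinj.countable
    have h0S : (0 : κ → ℤ) ∈ S := ⟨by simp, by simp⟩
    obtain ⟨e, he⟩ := hScount.exists_eq_range ⟨0, h0S⟩
    refine ⟨e, fun n => ?_, fun g hg => ?_⟩
    · have hmem : e n ∈ S := he ▸ Set.mem_range_self n
      exact hmem.1
    · have hgfin : (Function.support g).Finite := hg
      set h : κ → ℤ := fun i => if i ∈ D then g i else 0 with hh
      have hhS : h ∈ S := by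
        constructor
        · refine Set.Finite.subset hgfin fun i hi => ?_
          simp only [Function.mem_support, hh] at hi ⊢
          intro hgi
          exact hi (by simp [hgi])
        · intro i hi
          simp only [Function.mem_support, hh] at hi
          by_contra hiD
          exact hi (by simp [hiD])
      have : h ∈ Set.range e := he ▸ hhS
      obtain ⟨n, hn⟩ := this
      refine Set.mem_iUnion.2 ⟨n, ?_⟩
      rw [Set.mem_vadd_set_iff_neg_vadd_mem]
      apply hF n
      intro i hi
      have hiD : i ∈ D := Set.mem_iUnion.2 ⟨n, Finset.mem_coe.2 hi⟩
      have hni : e n i = g i := by rw [hn]; simp [hh, hiD]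
      show (-(e n) + g) i = 0
      simp [hni]
end

section
/- Let G be the subgroup of finitely supported elements of a product ∏_{α<κ} G_α of discrete countable groups, endowed with the product topology (κ infinite). Then G is Rothberger bounded: for every sequence (U_n) of neighborhoods of the identity there exist x_n ∈ G with G = ⋃_n x_n * U_n. -/
open scoped Pointwise

/-- The subgroup of finitely supported elements of a product of discrete countable
groups (indexed by an infinite set, product topology) is Rothberger bounded: for every
sequence of neighborhoods of the identity there are finitely supported elements whose
translates cover all finitely supported elements. -/
theorem stmt_11 {ι : Type*} [Infinite ι] (G : ι → Type*) [∀ i, Group (G i)]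
    [∀ i, Countable (G i)] [∀ i, TopologicalSpace (G i)] [∀ i, DiscreteTopology (G i)]
    (U : ℕ → Set (∀ i, G i)) (hU : ∀ n, U n ∈ nhds (1 : ∀ i, G i)) :
    ∃ x : ℕ → (∀ i, G i), (∀ n, {i | x n i ≠ 1}.Finite) ∧
      {f : (∀ i, G i) | {i | f i ≠ 1}.Finite} ⊆ ⋃ n, x n • U n := by
  classical
  -- Step 1: extract finite sets of coordinates controlling each U n
  have key : ∀ n, ∃ F : Finset ι, {f : ∀ i, G i | ∀ i ∈ F, f i = 1} ⊆ U n := by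
    intro n
    have h := hU n
    rw [nhds_pi, Filter.mem_pi] at h
    obtain ⟨I, hIfin, t, ht, hsub⟩ := h
    refine ⟨hIfin.toFinset, fun f hf => hsub fun i hi => ?_⟩
    have h1 : (1 : G i) ∈ t i := by
      have := ht i
      rwa [nhds_discrete, Filter.mem_pure] at this
    have : f i = 1 := hf i (hIfin.mem_toFinset.2 hi)
    rw [this]; exact h1
  choose F hF using key
  set J : Set ι := ⋃ n, (F n : Set ι) with hJdef
  have hJ : J.Countable := Set.countable_iUnion fun n => (F n).countable_toSet
  haveI := hJ.to_subtype
  -- the set D of finitely supported elements supported inside J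
  set D : Set (∀ i, G i) :=
    {f | {i | f i ≠ 1}.Finite ∧ ∀ i ∉ J, f i = 1} with hDdef
  -- D is countable
  have hD : D.Countable := by
    have hsub : D ⊆ ⋃ (s : Finset J),
        Set.range (fun (g : ∀ i : (s.image Subtype.val : Finset ι), G i) =>
          (fun i => if h : i ∈ (s.image Subtype.val : Finset ι) then g ⟨i, h⟩ else 1 :
            ∀ i, G i)) := by
      intro f hf
      obtain ⟨hfin, hJf⟩ := hf
      have hSJ : ∀ i ∈ hfin.toFinset, i ∈ J := by
        intro i hi
        by_contra hiJ
        exact (hfin.mem_toFinset.1 hi) (hJf i hiJ)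
      set s : Finset J := hfin.toFinset.attach.image
        (fun i => (⟨i.1, hSJ i.1 i.2⟩ : J)) with hsdef
      have himg : (s.image Subtype.val : Finset ι) = hfin.toFinset := by
        rw [hsdef, Finset.image_image]
        exact hfin.toFinset.attach_image_val
      refine Set.mem_iUnion.2 ⟨s, ⟨fun i => f i.1, ?_⟩⟩
      funext i
      by_cases h : i ∈ (s.image Subtype.val : Finset ι)
      · simp [h]
      · simp only [h, dif_neg, not_false_iff]
        by_contra hne
        exact h (himg ▸ hfin.mem_toFinset.2 (fun h' => hne h'.symm))
    exact Set.Countable.mono hsub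
      (Set.countable_iUnion fun s => Set.countable_range _)
  have hDne : (1 : ∀ i, G i) ∈ D := by
    constructor
    · simp
    · intro i _; rfl
  obtain ⟨x, hx⟩ := hD.exists_eq_range ⟨1, hDne⟩
  refine ⟨x, fun n => ?_, ?_⟩
  · have : x n ∈ D := hx ▸ Set.mem_range_self n
    exact this.1
  · intro g hg
    have hg : {i | g i ≠ 1}.Finite := hg
    set g' : ∀ i, G i := fun i => if i ∈ J then g i else 1 with hg'def
    have hg'D : g' ∈ D := by
      constructor
      · apply hg.subset
        intro i hi
        simp only [Set.mem_setOf_eq, hg'def] at hi ⊢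
        by_cases h : i ∈ J
        · simpa [h] using hi
        · simp [h] at hi
      · intro i hiJ
        simp [hg'def, hiJ]
    obtain ⟨n, hn⟩ := hx ▸ hg'D
    refine Set.mem_iUnion.2 ⟨n, Set.mem_smul_set_iff_inv_smul_mem.2 ?_⟩
    apply hF n
    intro i hi
    have hiJ : i ∈ J := Set.mem_iUnion.2 ⟨n, hi⟩
    have hxg : x n i = g i := by
      rw [hn]
      simp [hg'def, hiJ]
    show ((x n)⁻¹ * g) i = 1
    simp [Pi.mul_apply, Pi.inv_apply, hxg]
end

section
/- In the elementary 'countable-one' game on an infinite set S — where in inning n player ONE chooses a countable subset W_n of S with W_n ⊆ W_{n+1}, TWO responds with b_n ∈ W_n, and TWO wins if every x ∈ ⋃_n W_n satisfies b_n = x for infinitely many n — player TWO has a winning (perfect information) strategy. -/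
open Classical in
/-- Enumeration of a countable nonempty set, junk otherwise. -/
noncomputable def enumOf {S : Type*} [Nonempty S] (A : Set S) : ℕ → S :=
  if h : A.Countable ∧ A.Nonempty then h.1.exists_eq_range h.2 |>.choose
  else fun _ => Classical.arbitrary S

theorem enumOf_range {S : Type*} [Nonempty S] {A : Set S} (hc : A.Countable)
    (hne : A.Nonempty) : A = Set.range (enumOf A) := by
  rw [enumOf, dif_pos ⟨hc, hne⟩]
  exact (hc.exists_eq_range hne).choose_spec

/-- TWO has a winning strategy in the "countable-one" game on an infinite set `S`:
ONE plays an increasing sequence of countable subsets `W n` of `S`, TWO responds with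
`b n ∈ W n`, and TWO wins if every element of `⋃ n, W n` is chosen by TWO infinitely
often.  The strategy assigns to each finite sequence `(W 0, …, W n)` of ONE's moves an
element of `W n`; it is winning if every play following it is won by TWO. -/
theorem stmt_12 (S : Type*) [Infinite S] :
    ∃ σ : (n : ℕ) → (Fin (n + 1) → Set S) → S,
      ∀ W : ℕ → Set S, (∀ n, (W n).Nonempty) → (∀ n, (W n).Countable) → (∀ n, W n ⊆ W (n + 1)) →
        (∀ n, σ n (fun i => W i) ∈ W n) ∧
        ∀ x ∈ ⋃ n, W n, {n | σ n (fun i => W i) = x}.Infinite := by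
  haveI : Nonempty S := inferInstance
  refine ⟨fun n f => enumOf (f ⟨(Nat.unpair n).1, Nat.lt_succ_of_le (Nat.unpair_left_le n)⟩)
    (Nat.unpair n).2, ?_⟩
  intro W hne hc hsub
  have hmono : Monotone W := monotone_nat_of_le_succ hsub
  have hσ : ∀ n, enumOf (W (Nat.unpair n).1) (Nat.unpair n).2 ∈ W n := by
    intro n
    have h1 : enumOf (W (Nat.unpair n).1) (Nat.unpair n).2 ∈ W (Nat.unpair n).1 := by
      have := Set.mem_range_self (f := enumOf (W (Nat.unpair n).1)) (Nat.unpair n).2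
      rwa [← enumOf_range (hc _) (hne _)] at this
    exact hmono (Nat.unpair_left_le n) h1
  refine ⟨fun n => hσ n, ?_⟩
  intro x hx
  obtain ⟨_, ⟨i0, rfl⟩, hxi⟩ := hx
  -- for each m ≥ i0, there is j with enumOf (W m) j = x
  have key : ∀ m, i0 ≤ m → ∃ j, enumOf (W m) j = x := by
    intro m hm
    have : x ∈ Set.range (enumOf (W m)) := by
      rw [← enumOf_range (hc m) (hne m)]; exact hmono hm hxi
    exact this
  choose j hj using fun m (hm : i0 ≤ m) => key m hm
  have : Set.InjOn (fun m => Nat.pair m (if h : i0 ≤ m then j m h else 0))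
      (Set.Ici i0) := by
    intro a ha b hb hab
    have := congrArg (fun n => (Nat.unpair n).1) hab
    simpa [Nat.unpair_pair] using this
  have hinf : (Set.Ici i0 : Set ℕ).Infinite := Set.Ici_infinite i0
  apply Set.Infinite.mono _ (Set.Infinite.image this hinf)
  rintro n ⟨m, hm, rfl⟩
  have hm' : i0 ≤ m := hm
  simpa [Nat.unpair_pair, hm'] using hj m hm'
end

section
/- Let G be a topological group and suppose ONE has no winning strategy in the game G₁(O,O_X) played on G, where X ⊆ G. Then X is Rothberger bounded in G, i.e., S₁(O_nbd, O_X) holds: for every sequence (U_n) of neighborhoods of the identity there are x_n ∈ G with X ⊆ ⋃_n x_n*U_n. -/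
open scoped Pointwise

/-- If ONE has no winning strategy in the game `G₁(O, O_X)` on a topological group `G`
(ONE plays open covers of `G`, TWO picks a member of each, TWO wins if the picks cover
`X`), then `X` is Rothberger bounded in `G`: for every sequence of open neighborhoods
of the identity there are translates whose union contains `X`. -/
theorem stmt_16 {G : Type*} [Group G] [TopologicalSpace G] [IsTopologicalGroup G]
    (X : Set G)
    (hONE : ¬ ∃ σ : List (Set G) → Set (Set G),
      (∀ h : List (Set G), (∀ V ∈ σ h, IsOpen V) ∧ ⋃₀ σ h = Set.univ) ∧
      ∀ T : ℕ → Set G, (∀ n, T n ∈ σ (List.ofFn fun i : Fin n => T i)) →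
        ¬ X ⊆ ⋃ n, T n) :
    ∀ U : ℕ → Set G, (∀ n, IsOpen (U n) ∧ (1 : G) ∈ U n) →
      ∃ x : ℕ → G, X ⊆ ⋃ n, x n • U n := by
  intro U hU
  push_neg at hONE
  set σ : List (Set G) → Set (Set G) := fun h => {V | ∃ x : G, V = x • U h.length} with hσ
  have hlegal : ∀ h : List (Set G), (∀ V ∈ σ h, IsOpen V) ∧ ⋃₀ σ h = Set.univ := by
    intro h
    constructor
    · rintro V ⟨x, rfl⟩
      exact (hU h.length).1.smul x
    · apply Set.eq_univ_of_forall
      intro g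
      exact ⟨g • U h.length, ⟨g, rfl⟩, by
        simpa using Set.smul_mem_smul_set (a := g) (hU h.length).2⟩
  obtain ⟨T, hT, hTX⟩ := hONE σ hlegal
  have hx : ∀ n, ∃ x : G, T n = x • U n := by
    intro n
    have := hT n
    simp only [hσ, Set.mem_setOf_eq, List.length_ofFn] at this
    exact this
  choose x hxT using hx
  refine ⟨x, hTX.trans ?_⟩
  apply Set.iUnion_mono
  intro n
  rw [hxT n]
end

section
/- Let G be a Lindelöf P-group in which TWO has a winning strategy in the game G₁(O_nbd, O) (played with covers by left translates of identity neighborhoods). Then TWO has a winning strategy in the game G₁(O,O) on G. -/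
open scoped Pointwise

/-- Lebesgue covering lemma for Lindelöf P-groups. -/
lemma lebesgue_aux {G : Type*} [Group G] [TopologicalSpace G] [IsTopologicalGroup G]
    [LindelofSpace G]
    (hP : ∀ f : ℕ → Set G, (∀ n, IsOpen (f n)) → IsOpen (⋂ n, f n))
    (O : Set (Set G)) (hop : ∀ V ∈ O, IsOpen V) (hcov : ⋃₀ O = Set.univ) :
    ∃ N : Set G, IsOpen N ∧ (1 : G) ∈ N ∧ ∀ x : G, ∃ V ∈ O, x • N ⊆ V := by
  -- choose a member of the cover containing each point
  have hV : ∀ x : G, ∃ V ∈ O, x ∈ V := by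
    intro x
    have : x ∈ ⋃₀ O := by rw [hcov]; trivial
    simpa using this
  choose V hVO hxV using hV
  -- choose a small neighborhood W x of 1 with x • (W x * W x) ⊆ V x
  have hW : ∀ x : G, ∃ W : Set G, IsOpen W ∧ (1 : G) ∈ W ∧ W * W ⊆ x⁻¹ • V x := by
    intro x
    have h1 : x⁻¹ • V x ∈ nhds (1 : G) := by
      have : IsOpen (x⁻¹ • V x) := (hop (V x) (hVO x)).smul _
      refine this.mem_nhds ?_
      simpa using Set.smul_mem_smul_set (a := x⁻¹) (hxV x)
    exact exists_open_nhds_one_mul_subset h1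
  choose W hWopen hW1 hWW using hW
  -- Lindelöf: countable subcover of the cover by x • W x
  obtain ⟨t, htc, htcov⟩ := isLindelof_univ.elim_countable_subcover
    (fun x : G => x • W x) (fun x => (hWopen x).smul x)
    (by intro x _; exact Set.mem_iUnion.2 ⟨x, ⟨1, hW1 x, mul_one x⟩⟩)
  rcases t.eq_empty_or_nonempty with rfl | htne
  · refine ⟨Set.univ, isOpen_univ, trivial, fun x => absurd (htcov (Set.mem_univ x)) ?_⟩
    simp
  obtain ⟨f, rfl⟩ := Set.Countable.exists_eq_range htc htne
  refine ⟨⋂ n, W (f n), hP _ (fun n => hWopen _), Set.mem_iInter.2 fun n => hW1 _, ?_⟩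
  intro x
  have hx : x ∈ ⋃ i ∈ Set.range f, i • W i := htcov (Set.mem_univ x)
  simp only [Set.mem_iUnion] at hx
  obtain ⟨i, ⟨n, rfl⟩, hxi⟩ := hx
  refine ⟨V (f n), hVO _, ?_⟩
  rintro y ⟨m, hm, rfl⟩
  obtain ⟨w, hw, rfl⟩ := hxi
  have hmW : m ∈ W (f n) := Set.mem_iInter.1 hm n
  have : w * m ∈ (f n)⁻¹ • V (f n) := hWW _ (Set.mul_mem_mul hw hmW)
  have := Set.smul_mem_smul_set (a := f n) this
  simpa [mul_assoc, smul_smul] using this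

/-- If `G` is a Lindelöf P-group and TWO has a winning strategy in the game
`G₁(O_nbd, O)` (ONE plays covers by left translates of open identity neighborhoods,
TWO picks a translate, and TWO wins if the picks cover `G`), then TWO has a winning
strategy in the game `G₁(O, O)` on `G` (ONE plays arbitrary open covers). -/
theorem stmt_18 {G : Type*} [Group G] [TopologicalSpace G] [IsTopologicalGroup G]
    [LindelofSpace G]
    (hP : ∀ f : ℕ → Set G, (∀ n, IsOpen (f n)) → IsOpen (⋂ n, f n))
    (hTWO : ∃ σ : (n : ℕ) → (Fin (n + 1) → Set G) → G,
      ∀ U : ℕ → Set G, (∀ n, IsOpen (U n) ∧ (1 : G) ∈ U n) →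
        (⋃ n, σ n (fun i => U i) • U n) = Set.univ) :
    ∃ τ : (n : ℕ) → (Fin (n + 1) → Set (Set G)) → Set G,
      ∀ O : ℕ → Set (Set G), (∀ n, (∀ V ∈ O n, IsOpen V) ∧ ⋃₀ O n = Set.univ) →
        (∀ n, τ n (fun i => O i) ∈ O n) ∧ (⋃ n, τ n (fun i => O i)) = Set.univ := by
  classical
  obtain ⟨σ, hσ⟩ := hTWO
  -- for every family of sets, a "Lebesgue number" neighborhood (univ if not a cover)
  have hN : ∀ 𝒪 : Set (Set G), ∃ N : Set G, IsOpen N ∧ (1 : G) ∈ N ∧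
      (((∀ V ∈ 𝒪, IsOpen V) ∧ ⋃₀ 𝒪 = Set.univ) → ∀ x : G, ∃ V ∈ 𝒪, x • N ⊆ V) := by
    intro 𝒪
    by_cases h : (∀ V ∈ 𝒪, IsOpen V) ∧ ⋃₀ 𝒪 = Set.univ
    · obtain ⟨N, h1, h2, h3⟩ := lebesgue_aux hP 𝒪 h.1 h.2
      exact ⟨N, h1, h2, fun _ => h3⟩
    · exact ⟨Set.univ, isOpen_univ, trivial, fun h' => absurd h' h⟩
  choose N hNopen hN1 hNspec using hN
  refine ⟨fun n h => if hx : ∃ V ∈ h (Fin.last n), (σ n (fun i => N (h i))) • N (h (Fin.last n)) ⊆ V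
      then hx.choose else ∅, ?_⟩
  intro O hO
  set U : ℕ → Set G := fun n => N (O n) with hUdef
  have hU : ∀ n, IsOpen (U n) ∧ (1 : G) ∈ U n := fun n => ⟨hNopen _, hN1 _⟩
  have hcov := hσ U hU
  have hex : ∀ n : ℕ, ∃ V ∈ O ((Fin.last n : Fin (n+1)) : ℕ),
      (σ n (fun i => N (O (i : ℕ)))) • N (O ((Fin.last n : Fin (n+1)) : ℕ)) ⊆ V := by
    intro n
    have := hNspec (O n) (hO n) (σ n (fun i => N (O (i : ℕ))))
    simpa using this
  have hmem : ∀ n, (if hx : ∃ V ∈ O ((Fin.last n : Fin (n+1)) : ℕ),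
      (σ n (fun i => N (O (i : ℕ)))) • N (O ((Fin.last n : Fin (n+1)) : ℕ)) ⊆ V
      then hx.choose else ∅) ∈ O n := by
    intro n
    rw [dif_pos (hex n)]
    exact (hex n).choose_spec.1
  constructor
  · intro n; exact hmem n
  · apply Set.eq_univ_of_univ_subset
    rw [← hcov]
    refine Set.iUnion_subset fun n => ?_
    refine Set.Subset.trans ?_ (Set.subset_iUnion _ n)
    have hsub := (hex n).choose_spec.2
    show _ ⊆ (if hx : ∃ V ∈ O ((Fin.last n : Fin (n+1)) : ℕ),
      (σ n (fun i => N (O (i : ℕ)))) • N (O ((Fin.last n : Fin (n+1)) : ℕ)) ⊆ V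
      then hx.choose else ∅)
    rw [dif_pos (hex n)]
    simpa [hUdef] using hsub
end
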